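/- Let (X1, X2) be a representation of the super Jordan plane on a 2-dimensional k-vector space V with X1 ≠ 0. Then there exists a basis {v1, v2} of V with X1 v1 = 0 and X1 v2 = v1 such that either (i) X2 v1 = a·v1 and X2 v2 = b·v1 + a·v2 for some a, b ∈ k, or (ii) X2 v1 = a·v1 and X2 v2 = −a·v2 for some a ∈ k with a ≠ 0. Consequently every 2-dimensional indecomposable representation with X1 ≠ 0 is isomorphic to one of the representations U_{a,b} (matrix of X2 equal to [[a,b],[0,a]]) or V_a (matrix of X2 equal to [[a,0],[0,−a]], a ≠ 0) with X1 = E12. -/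

import Mathlib

/-- A subspace `W` is a submodule for the representation `(X1, X2)` of the super Jordan
plane if it is invariant under both `X1` and `X2`. -/
def IsSubrep {k V : Type*} [Field k] [AddCommGroup V] [Module k V]
    (X1 X2 : Module.End k V) (W : Submodule k V) : Prop :=
  Submodule.map X1 W ≤ W ∧ Submodule.map X2 W ≤ W

/-- The representation `(X1, X2)` is indecomposable: `V ≠ 0` and `V` is not the direct
sum of two nonzero submodules. -/
def IsIndecomposable {k V : Type*} [Field k] [AddCommGroup V] [Module k V]
    (X1 X2 : Module.End k V) : Prop :=
  Nontrivial V ∧ ¬ ∃ W L : Submodule k V, IsSubrep X1 X2 W ∧ IsSubrep X1 X2 L ∧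
    W ≠ ⊥ ∧ L ≠ ⊥ ∧ IsCompl W L


open Module

section aux
variable {k V : Type*} [Field k] [AddCommGroup V] [Module k V]

lemma coord_lemma (X : Module.End k V) (B : Basis (Fin 2) k V)
    (M : Matrix (Fin 2) (Fin 2) k)
    (hX : ∀ j, X (B j) = M 0 j • B 0 + M 1 j • B 1) (u : V) :
    B.equivFun (X u) = Matrix.toLin' M (B.equivFun u) := by
  have heq : (B.equivFun.toLinearMap ∘ₗ X) =
      (Matrix.toLin' M) ∘ₗ B.equivFun.toLinearMap := by
    apply B.ext
    intro j
    funext i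
    simp only [LinearMap.coe_comp, LinearEquiv.coe_coe, Function.comp_apply, hX j,
      map_add, map_smul, Matrix.toLin'_apply]
    have : (B.equivFun (B j)) = Pi.single j 1 := by
      funext l; simp [Pi.single_apply, eq_comm]
    rw [this, Matrix.mulVec_single]
    fin_cases i <;> fin_cases j <;> simp
  exact DFunLike.congr_fun heq u

end aux

theorem stmt16 (k V : Type*) [Field k] [CharZero k] [AddCommGroup V] [Module k V]
    [FiniteDimensional k V] (hdim : Module.finrank k V = 2)
    (X1 X2 : Module.End k V) (h1 : X1 * X1 = 0)
    (h2 : X2 ^ 2 * X1 = X1 * X2 ^ 2 + X1 * X2 * X1)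
    (h0 : X1 ≠ 0) :
    (∃ v : Basis (Fin 2) k V, X1 (v 0) = 0 ∧ X1 (v 1) = v 0 ∧
      ((∃ a b : k, X2 (v 0) = a • v 0 ∧ X2 (v 1) = b • v 0 + a • v 1) ∨
       (∃ a : k, a ≠ 0 ∧ X2 (v 0) = a • v 0 ∧ X2 (v 1) = -a • v 1))) ∧
    (∃ e : V ≃ₗ[k] (Fin 2 → k),
      (∀ u : V, e (X1 u) = Matrix.toLin' !![(0 : k), 1; 0, 0] (e u)) ∧
      ((∃ a b : k, ∀ u : V, e (X2 u) = Matrix.toLin' !![a, b; 0, a] (e u)) ∨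
       (∃ a : k, a ≠ 0 ∧
          ∀ u : V, e (X2 u) = Matrix.toLin' !![a, 0; 0, -a] (e u)))) := by
  suffices H : (∃ v : Basis (Fin 2) k V, X1 (v 0) = 0 ∧ X1 (v 1) = v 0 ∧
      ((∃ a b : k, X2 (v 0) = a • v 0 ∧ X2 (v 1) = b • v 0 + a • v 1) ∨
       (∃ a : k, a ≠ 0 ∧ X2 (v 0) = a • v 0 ∧ X2 (v 1) = -a • v 1))) by
    refine ⟨H, ?_⟩
    obtain ⟨v, hv0, hv1, hcase⟩ := H
    refine ⟨v.equivFun, ?_, ?_⟩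
    · intro u
      exact coord_lemma X1 v _ (by intro j; fin_cases j <;> simp [hv0, hv1]) u
    · rcases hcase with ⟨a, b, ha, hb⟩ | ⟨a, hane, ha, hb⟩
      · exact Or.inl ⟨a, b, fun u =>
          coord_lemma X2 v _ (by intro j; fin_cases j <;> simp [ha, hb]) u⟩
      · exact Or.inr ⟨a, hane, fun u =>
          coord_lemma X2 v _ (by intro j; fin_cases j <;> simp [ha, hb]) u⟩
  -- X1 applied twice is zero
  have hX1sq : ∀ u : V, X1 (X1 u) = 0 := fun u => by
    have := congrArg (fun f : Module.End k V => f u) h1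
    simpa using this
  -- relation pointwise
  have hrel : ∀ u : V, X2 (X2 (X1 u)) = X1 (X2 (X2 u)) + X1 (X2 (X1 u)) := fun u => by
    have := congrArg (fun f : Module.End k V => f u) h2
    simpa [Module.End.mul_apply, pow_two] using this
  -- find w with X1 w ≠ 0
  obtain ⟨w, hw⟩ : ∃ w : V, X1 w ≠ 0 := by
    by_contra h
    push_neg at h
    exact h0 (LinearMap.ext fun u => by simp [h u])
  -- basis construction helper
  have mkB : ∀ w2 : V, X1 w2 ≠ 0 → ∃ B : Basis (Fin 2) k V,
      B 0 = X1 w2 ∧ B 1 = w2 := by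
    intro w2 hne
    have hli : LinearIndependent k ![X1 w2, w2] := by
      rw [LinearIndependent.pair_iff]
      intro s t hst
      have h' := congrArg X1 hst
      simp only [map_add, map_smul, hX1sq, smul_zero, zero_add, map_zero] at h'
      have ht : t = 0 := by
        rcases smul_eq_zero.mp h' with h | h
        · exact h
        · exact absurd h hne
      subst ht
      simp only [zero_smul, add_zero] at hst
      rcases smul_eq_zero.mp hst with h | h
      · exact ⟨h, rfl⟩
      · exact absurd h hne
    refine ⟨basisOfLinearIndependentOfCardEqFinrank hli (by simp [hdim]), ?_, ?_⟩ <;>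
      simp [coe_basisOfLinearIndependentOfCardEqFinrank]
  obtain ⟨B, hB0, hB1⟩ := mkB w hw
  have hXB0 : X1 (B 0) = 0 := by rw [hB0, hX1sq]
  have hXB1 : X1 (B 1) = B 0 := by rw [hB1, hB0]
  -- coordinates of X2
  set a := B.repr (X2 (B 0)) 0 with ha
  set c := B.repr (X2 (B 0)) 1 with hc
  set b := B.repr (X2 (B 1)) 0 with hb
  set d := B.repr (X2 (B 1)) 1 with hd
  have hX2B0 : X2 (B 0) = a • B 0 + c • B 1 := by
    conv_lhs => rw [← B.sum_repr (X2 (B 0))]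
    rw [Fin.sum_univ_two]
  have hX2B1 : X2 (B 1) = b • B 0 + d • B 1 := by
    conv_lhs => rw [← B.sum_repr (X2 (B 1))]
    rw [Fin.sum_univ_two]
  -- derive equations from relation at B 1
  have E : (a * a + c * b) • B 0 + (c * a + c * d) • B 1
      = (b * c + d * d + c) • B 0 := by
    have h := hrel (B 1)
    rw [hXB1] at h
    have l1 : X2 (X2 (B 0)) = (a * a + c * b) • B 0 + (c * a + c * d) • B 1 := by
      rw [hX2B0, map_add, map_smul, map_smul, hX2B0, hX2B1]; module
    have l2 : X1 (X2 (X2 (B 1))) = (b * c + d * d) • B 0 := by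
      rw [hX2B1]
      simp only [map_add, map_smul, hX2B0, hX2B1, hXB0, hXB1]
      module
    have l3 : X1 (X2 (B 0)) = c • B 0 := by
      rw [hX2B0, map_add, map_smul, map_smul, hXB0, hXB1]; module
    rw [l1, l2, l3] at h
    rw [h]; module
  have eq1 : a * a + c * b = b * c + d * d + c := by
    have := congrArg (fun x => B.repr x 0) E
    simpa using this
  have eq2 : c * (a + d) = 0 := by
    have := congrArg (fun x => B.repr x 1) E
    simp at this
    linear_combination this
  have hc0 : c = 0 := by
    by_contra hcne
    have had : a + d = 0 := by
      rcases mul_eq_zero.mp eq2 with h | h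
      · exact absurd h hcne
      · exact h
    exact hcne (by linear_combination (a - d) * had - eq1)
  rw [hc0, zero_smul, add_zero] at hX2B0
  have hsq : (a - d) * (a + d) = 0 := by
    rw [hc0] at eq1
    linear_combination eq1
  rcases mul_eq_zero.mp hsq with hda | hda
  · -- d = a, case (i)
    have hda' : d = a := by linear_combination -hda
    rw [hda'] at hX2B1
    exact ⟨B, hXB0, hXB1, Or.inl ⟨a, b, hX2B0, hX2B1⟩⟩
  · -- d = -a
    have hda' : d = -a := by linear_combination hda
    rw [hda'] at hX2B1
    by_cases haz : a = 0
    · -- a = 0 : also case (i) with a = 0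
      rw [haz, neg_zero] at hX2B1
      refine ⟨B, hXB0, hXB1, Or.inl ⟨0, b, by rw [hX2B0, haz], by rw [hX2B1]⟩⟩
    · -- a ≠ 0 : shift basis, case (ii)
      set t : k := -b / (2 * a) with ht
      have hX1w2' : X1 (B 1 + t • B 0) = B 0 := by
        rw [map_add, map_smul, hXB0, hXB1, smul_zero, add_zero]
      obtain ⟨B', hB'0, hB'1⟩ := mkB (B 1 + t • B 0)
        (by rw [hX1w2']; exact B.ne_zero 0)
      rw [hX1w2'] at hB'0
      have hXB'0 : X1 (B' 0) = 0 := by rw [hB'0, hXB0]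
      have hXB'1 : X1 (B' 1) = B' 0 := by rw [hB'1, hX1w2', hB'0]
      have hX2B'0 : X2 (B' 0) = a • B' 0 := by rw [hB'0, hX2B0]
      have hX2B'1 : X2 (B' 1) = -a • B' 1 := by
        rw [hB'1, map_add, map_smul, hX2B0, hX2B1]
        have hco : b + t * a = -a * t := by
          rw [ht]; field_simp; ring
        match_scalars
        · linear_combination hco
        · ring
      exact ⟨B', hXB'0, hXB'1, Or.inr ⟨a, haz, hX2B'0, hX2B'1⟩⟩
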